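/- Let G be a finite group with a Cayley set S consisting of a involutions and b non-involutions, let N ⊴ G and ρ: G → G/N the quotient map. Then ρ(S) \ {1} is a Cayley set of G/N consisting of a' involutions and b' non-involutions where b' ≤ b and 2a' ≤ 2a + (b - b'). -/

import Mathlib

/-- If `S` is an `(a,b)`-valent Cayley set of a finite group `G` (with `a`
involutions and `b` non-involutions) and `N ⊴ G`, then the image of `S` in
`G/N` with the identity removed is an `(a',b')`-valent Cayley set of `G/N`
with `b' ≤ b` and `2a' ≤ 2a + (b - b')`. -/
theorem cayley_set_quotient_valency {G : Type*} [Group G] [Fintype G]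
    (N : Subgroup G) [N.Normal] (S : Set G)
    (h1 : (1 : G) ∉ S) (hinv : ∀ s ∈ S, s⁻¹ ∈ S)
    (hgen : Subgroup.closure S = ⊤)
    (a b : ℕ)
    (ha : a = {s ∈ S | orderOf s = 2}.ncard)
    (hb : b = {s ∈ S | orderOf s ≠ 2}.ncard) :
    ∃ a' b' : ℕ,
      a' = {t ∈ (QuotientGroup.mk' N '' S) \ {1} | orderOf t = 2}.ncard ∧
      b' = {t ∈ (QuotientGroup.mk' N '' S) \ {1} | orderOf t ≠ 2}.ncard ∧
      (1 : G ⧸ N) ∉ (QuotientGroup.mk' N '' S) \ {1} ∧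
      (∀ t ∈ (QuotientGroup.mk' N '' S) \ {1},
        t⁻¹ ∈ (QuotientGroup.mk' N '' S) \ {1}) ∧
      Subgroup.closure ((QuotientGroup.mk' N '' S) \ {1}) = ⊤ ∧
      b' ≤ b ∧ 2 * a' ≤ 2 * a + (b - b') := by
  classical
  set ρ : G →* G ⧸ N := QuotientGroup.mk' N with hρ
  set T : Set (G ⧸ N) := (ρ '' S) \ {1} with hT
  have hchoice : ∀ t ∈ T, ∃ s ∈ S, ρ s = t := by
    rintro t ⟨⟨s, hs, rfl⟩, _⟩; exact ⟨s, hs, rfl⟩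
  set f : G ⧸ N → G := fun t => if h : ∃ s ∈ S, ρ s = t then h.choose else 1 with hf
  have hfS : ∀ t ∈ T, f t ∈ S := by
    intro t ht
    have h : ∃ s ∈ S, ρ s = t := hchoice t ht
    simp only [hf, dif_pos h]
    exact h.choose_spec.1
  have hfρ : ∀ t ∈ T, ρ (f t) = t := by
    intro t ht
    have h : ∃ s ∈ S, ρ s = t := hchoice t ht
    simp only [hf, dif_pos h]
    exact h.choose_spec.2
  have hdvd : ∀ t ∈ T, orderOf t ∣ orderOf (f t) := by
    intro t ht
    have := orderOf_map_dvd ρ (f t)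
    rw [hfρ t ht] at this; exact this
  have htne1 : ∀ t ∈ T, t ≠ 1 := by rintro t ⟨_, ht⟩; simpa using ht
  have hord2 : ∀ t ∈ T, orderOf t ≠ 2 → orderOf (f t) ≠ 2 := by
    intro t ht hto h2
    have hd : orderOf t ∣ 2 := h2 ▸ hdvd t ht
    rcases (Nat.dvd_prime Nat.prime_two).mp hd with h | h
    · exact htne1 t ht (orderOf_eq_one_iff.mp h)
    · exact hto h
  set A' : Set (G ⧸ N) := {t ∈ T | orderOf t = 2} with hA'
  set B' : Set (G ⧸ N) := {t ∈ T | orderOf t ≠ 2} with hB'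
  set D : Set G := {s ∈ S | orderOf s ≠ 2} with hD
  set D₂ : Set G := {s ∈ D | orderOf (ρ s) = 2} with hD₂
  have hfinD : D.Finite := Set.toFinite _
  have hB'sub : ∀ t ∈ B', f t ∈ D \ D₂ := by
    rintro t ⟨ht, hto⟩
    refine ⟨⟨hfS t ht, hord2 t ht hto⟩, ?_⟩
    intro hmem
    exact hto (by rw [← hfρ t ht]; exact hmem.2)
  have hfinj : ∀ s₁ ∈ T, ∀ s₂ ∈ T, f s₁ = f s₂ → s₁ = s₂ := by
    intro s₁ h₁ s₂ h₂ he
    rw [← hfρ s₁ h₁, ← hfρ s₂ h₂, he]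
  have hb' : B'.ncard ≤ (D \ D₂).ncard :=
    Set.ncard_le_ncard_of_injOn f (fun t ht => hB'sub t ht)
      (fun s₁ h₁ s₂ h₂ he => hfinj s₁ h₁.1 s₂ h₂.1 he) hfinD.diff
  set A₁ : Set (G ⧸ N) := {t ∈ A' | ∃ s ∈ S, ρ s = t ∧ orderOf s = 2} with hA₁
  have hA₁sub : A₁ ⊆ A' := fun t ht => ht.1
  set g : G ⧸ N → G := fun t =>
    if h : ∃ s ∈ S, ρ s = t ∧ orderOf s = 2 then h.choose else 1 with hg
  have hgspec : ∀ t ∈ A₁, g t ∈ S ∧ ρ (g t) = t ∧ orderOf (g t) = 2 := by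
    rintro t ⟨_, h⟩
    simp only [hg, dif_pos h]
    exact ⟨h.choose_spec.1, h.choose_spec.2⟩
  have hA₁card : A₁.ncard ≤ {s ∈ S | orderOf s = 2}.ncard :=
    Set.ncard_le_ncard_of_injOn g
      (fun t ht => ⟨(hgspec t ht).1, (hgspec t ht).2.2⟩)
      (fun s₁ h₁ s₂ h₂ he => by
        rw [← (hgspec s₁ h₁).2.1, ← (hgspec s₂ h₂).2.1, he])
      (Set.toFinite _)
  have hA₂f : ∀ t ∈ A' \ A₁, f t ∈ D₂ ∧ ρ (f t) = t := by
    rintro t ⟨⟨ht, ht2⟩, htn⟩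
    have hfs := hfS t ht
    have hfr := hfρ t ht
    have hford : orderOf (f t) ≠ 2 := fun h2 =>
      htn ⟨⟨ht, ht2⟩, f t, hfs, hfr, h2⟩
    exact ⟨⟨⟨hfs, hford⟩, by rw [hfr]; exact ht2⟩, hfr⟩
  set E : Set G := f '' (A' \ A₁) with hE
  have hEsub : E ⊆ D₂ := by rintro x ⟨t, ht, rfl⟩; exact (hA₂f t ht).1
  have hEinv : (Inv.inv '' E) ⊆ D₂ := by
    rintro x ⟨y, ⟨t, ht, rfl⟩, rfl⟩
    obtain ⟨⟨⟨hyS, hyo⟩, hyρ⟩, hfr⟩ := hA₂f t ht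
    refine ⟨⟨hinv _ hyS, by rw [orderOf_inv]; exact hyo⟩, ?_⟩
    rw [map_inv, hfr, orderOf_inv]
    exact ht.1.2
  have hdisj : Disjoint E (Inv.inv '' E) := by
    rw [Set.disjoint_left]
    rintro x ⟨t, ht, rfl⟩ ⟨y, ⟨t', ht', rfl⟩, hxy⟩
    obtain ⟨⟨⟨hS1, ho1⟩, _⟩, hr1⟩ := hA₂f t ht
    obtain ⟨⟨⟨hS2, ho2⟩, _⟩, hr2⟩ := hA₂f t' ht'
    -- hxy : (f t')⁻¹ = f t
    have htt : t = t'⁻¹ := by rw [← hr1, ← hxy, map_inv, hr2]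
    have ht'sq : t' * t' = 1 := by
      have h := pow_orderOf_eq_one t'
      rw [ht'.1.2, sq] at h
      exact h
    have ht'inv : t'⁻¹ = t' := inv_eq_of_mul_eq_one_right ht'sq
    have htt' : t = t' := htt.trans ht'inv
    have hff : f t = f t' := by rw [htt']
    have hfe : (f t)⁻¹ = f t := by rw [hff] at hxy ⊢; exact hxy
    have hdv : orderOf (f t) ∣ 2 := orderOf_dvd_iff_pow_eq_one.mpr (by
      rw [sq]
      nth_rewrite 1 [← hfe]
      exact inv_mul_cancel _)
    rcases (Nat.dvd_prime Nat.prime_two).mp hdv with h | h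
    · have hft1 : f t = 1 := orderOf_eq_one_iff.mp h
      have : t = 1 := by rw [← hr1, hft1, map_one]
      exact htne1 t ht.1.1 this
    · exact ho1 h
  have hEcard : E.ncard = (A' \ A₁).ncard :=
    Set.ncard_image_of_injOn
      (fun s₁ h₁ s₂ h₂ he => hfinj s₁ h₁.1.1 s₂ h₂.1.1 he)
  have hEinvcard : (Inv.inv '' E).ncard = E.ncard :=
    Set.ncard_image_of_injective _ inv_injective
  have hunion : E.ncard + (Inv.inv '' E).ncard = (E ∪ Inv.inv '' E).ncard :=
    (Set.ncard_union_eq hdisj (Set.toFinite _) (Set.toFinite _)).symm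
  have h2A₂ : 2 * (A' \ A₁).ncard ≤ D₂.ncard := by
    have hle := Set.ncard_le_ncard (Set.union_subset hEsub hEinv) (Set.toFinite _)
    omega
  have hA'split : (A' \ A₁).ncard + A₁.ncard = A'.ncard :=
    Set.ncard_diff_add_ncard_of_subset hA₁sub (Set.toFinite _)
  have hDsplit : (D \ D₂).ncard + D₂.ncard = D.ncard :=
    Set.ncard_diff_add_ncard_of_subset (fun s hs => hs.1) hfinD
  refine ⟨A'.ncard, B'.ncard, rfl, rfl, ?_, ?_, ?_, ?_, ?_⟩
  · simp [hT]
  · rintro t ⟨⟨s, hs, rfl⟩, hne⟩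
    refine ⟨⟨s⁻¹, hinv s hs, by simp⟩, ?_⟩
    simp only [Set.mem_singleton_iff] at hne ⊢
    exact fun h => hne (by rw [← inv_inv (ρ s), h, inv_one])
  · have hsurj : Function.Surjective ρ := QuotientGroup.mk'_surjective N
    have himg : Subgroup.closure (ρ '' S) = ⊤ := by
      rw [← MonoidHom.map_closure, hgen]
      exact Subgroup.map_top_of_surjective ρ hsurj
    rw [← himg]
    apply le_antisymm (Subgroup.closure_mono Set.diff_subset)
    rw [Subgroup.closure_le]
    intro x hx
    by_cases hx1 : x = 1
    · simpa [hx1] using Subgroup.one_mem (Subgroup.closure ((ρ '' S) \ {1}))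
    · exact Subgroup.subset_closure ⟨hx, hx1⟩
  · rw [hb]
    calc B'.ncard ≤ (D \ D₂).ncard := hb'
      _ ≤ D.ncard := Set.ncard_le_ncard Set.diff_subset hfinD
  · rw [ha, hb]
    omega
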